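/- arXiv:2512.15605 — 4 statements merged into one kernel-verified Lean document; each statement's English description precedes it below -/
import Mathlib

section
/- Stability of softargmax with respect to Kullback–Leibler divergence: for every k ≥ 1 and all functions f, g : Fin k → ℝ, the distributions p_f = softargmax(f) and p_g = softargmax(g) satisfy KL(p_f, p_g) ≤ 2·‖f − g‖_∞, where ‖h‖_∞ = max_{j} |h(j)|. -/
/-- **Stability of softargmax w.r.t. Kullback–Leibler divergence.**
For every `k ≥ 1` and all `f, g : Fin k → ℝ`, the softargmax distributions
`p_f(i) = exp (f i) / ∑ j, exp (f j)` and `p_g` satisfy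
`KL(p_f, p_g) ≤ 2 ⬝ ‖f - g‖_∞`. -/
theorem softargmax_kl_stability (k : ℕ) (hk : 1 ≤ k) (f g : Fin k → ℝ) :
    (∑ i, (Real.exp (f i) / ∑ j, Real.exp (f j)) *
        Real.log ((Real.exp (f i) / ∑ j, Real.exp (f j)) /
          (Real.exp (g i) / ∑ j, Real.exp (g j)))) ≤
      2 * Finset.univ.sup' (Finset.univ_nonempty_iff.mpr ⟨⟨0, hk⟩⟩)
        (fun j => |f j - g j|) := by
  have hne : (Finset.univ : Finset (Fin k)).Nonempty := Finset.univ_nonempty_iff.mpr ⟨⟨0, hk⟩⟩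
  set M := Finset.univ.sup' hne (fun j => |f j - g j|) with hM
  have hMle : ∀ i : Fin k, |f i - g i| ≤ M := fun i =>
    Finset.le_sup' (fun j => |f j - g j|) (Finset.mem_univ i)
  set Sf := ∑ j, Real.exp (f j) with hSf
  set Sg := ∑ j, Real.exp (g j) with hSg
  have hSfpos : 0 < Sf := Finset.sum_pos (fun j _ => Real.exp_pos _) hne
  have hSgpos : 0 < Sg := Finset.sum_pos (fun j _ => Real.exp_pos _) hne
  have hlog : ∀ i : Fin k,
      Real.log ((Real.exp (f i) / Sf) / (Real.exp (g i) / Sg)) =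
        (f i - g i) + (Real.log Sg - Real.log Sf) := by
    intro i
    rw [Real.log_div (by positivity) (by positivity),
      Real.log_div (Real.exp_ne_zero _) hSfpos.ne',
      Real.log_div (Real.exp_ne_zero _) hSgpos.ne',
      Real.log_exp, Real.log_exp]
    ring
  have hsum1 : ∑ i, Real.exp (f i) / Sf = 1 := by
    rw [← Finset.sum_div, div_self hSfpos.ne']
  calc (∑ i, (Real.exp (f i) / Sf) *
        Real.log ((Real.exp (f i) / Sf) / (Real.exp (g i) / Sg)))
      = (∑ i, (Real.exp (f i) / Sf) * (f i - g i)) + (Real.log Sg - Real.log Sf) := by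
        simp only [hlog, mul_add]
        rw [Finset.sum_add_distrib, ← Finset.sum_mul, hsum1, one_mul]
    _ ≤ M + M := by
        gcongr
        · calc (∑ i, (Real.exp (f i) / Sf) * (f i - g i))
              ≤ ∑ i, (Real.exp (f i) / Sf) * M := by
                apply Finset.sum_le_sum
                intro i _
                exact mul_le_mul_of_nonneg_left
                  ((le_abs_self _).trans (hMle i)) (by positivity)
            _ = M := by rw [← Finset.sum_mul, hsum1, one_mul]
        · have hSgle : Sg ≤ Real.exp M * Sf := by
            rw [Finset.mul_sum]
            apply Finset.sum_le_sum
            intro j _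
            rw [← Real.exp_add]
            apply Real.exp_le_exp.mpr
            have := (abs_le.mp (hMle j)).2
            linarith [(abs_le.mp (hMle j)).1]
          have := Real.log_le_log hSgpos hSgle
          rw [Real.log_mul (Real.exp_ne_zero _) hSfpos.ne', Real.log_exp] at this
          linarith
    _ = 2 * M := by ring
end

section
/- Bijection between EBMs and ARMs (equality of distributions): if q = M(r), then for every finished response y ∈ 𝒴 one has p^EBM_{R_r}(y|x) = p^ARM_q(y|x). -/
open Finset

/-! Contexts extending a fixed prompt `x` by `t < T` vocabulary tokens; a context is a
prefix of vocabulary tokens of length `< T`.  `none : Option V` plays the role of `EOS`. -/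

/-- Contexts extending the prompt by fewer than `T` vocabulary tokens. -/
abbrev Ctx (V : Type) (T : ℕ) := Σ t : Fin T, Fin (t : ℕ) → V

/-- Admissible next tokens at a context: only `EOS` (= `none`) at maximal contexts. -/
def adm (V : Type) [Fintype V] (T : ℕ) (s : Ctx V T) : Finset (Option V) :=
  if (s.1 : ℕ) + 1 = T then {none} else Finset.univ

/-- Soft value `V_q(s) = log ∑_{j admissible at s} exp q(s, j)`. -/
noncomputable def Vq (V : Type) [Fintype V] (T : ℕ)
    (q : Ctx V T × Option V → ℝ) (s : Ctx V T) : ℝ :=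
  Real.log (∑ a ∈ adm V T s, Real.exp (q (s, a)))

/-- Next-token policy `π_q(j | s) = exp (q(s,j) - V_q(s))`. -/
noncomputable def piq (V : Type) [Fintype V] (T : ℕ)
    (q : Ctx V T × Option V → ℝ) (s : Ctx V T) (a : Option V) : ℝ :=
  Real.exp (q (s, a) - Vq V T q s)

/-- Extending a context by one vocabulary token. -/
def ext (V : Type) (T : ℕ) (s : Ctx V T) (v : V) (h : (s.1 : ℕ) + 1 < T) : Ctx V T :=
  ⟨⟨(s.1 : ℕ) + 1, h⟩, Fin.snoc s.2 v⟩

/-- The strict prefix of length `i` of (the vocabulary part of) a finished response `y`. -/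
def pref (V : Type) (T : ℕ) (y : Ctx V T) (i : Fin (y.1 : ℕ)) : Ctx V T :=
  ⟨⟨(i : ℕ), lt_trans i.isLt y.1.isLt⟩, fun j => y.2 (Fin.castLE (le_of_lt i.isLt) j)⟩

/-- The mapping `M` (backward recursion), as a function of the depth of the context. -/
noncomputable def Mgo (V : Type) [Fintype V] (T : ℕ) (r : Ctx V T × Option V → ℝ)
    (t : ℕ) (ht : t < T) (s : Fin t → V) (a : Option V) : ℝ :=
  match a with
  | none => r (⟨⟨t, ht⟩, s⟩, none)
  | some v =>
    r (⟨⟨t, ht⟩, s⟩, some v) +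
      if h : t + 1 < T then
        Real.log (∑ b ∈ adm V T ⟨⟨t + 1, h⟩, Fin.snoc s v⟩,
          Real.exp (Mgo V T r (t + 1) h (Fin.snoc s v) b))
      else 0
termination_by T - t
decreasing_by omega

/-- The mapping `q = M(r)`: `q(s, EOS) = r(s, EOS)` and
`q(s, y) = r(s, y) + V_q(s ⊕ y)` for a vocabulary token `y`. -/
noncomputable def Mmap (V : Type) [Fintype V] (T : ℕ)
    (r : Ctx V T × Option V → ℝ) : Ctx V T × Option V → ℝ :=
  fun p => Mgo V T r (p.1.1 : ℕ) p.1.1.isLt p.1.2 p.2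

/-- The inverse mapping `r = M⁻¹(q)`: `r(s, EOS) = q(s, EOS)` and
`r(s, y) = q(s, y) - V_q(s ⊕ y)` for a vocabulary token `y`. -/
noncomputable def Minv (V : Type) [Fintype V] (T : ℕ)
    (q : Ctx V T × Option V → ℝ) : Ctx V T × Option V → ℝ :=
  fun p =>
    match p with
    | (s, none) => q (s, none)
    | (s, some v) =>
      q (s, some v) - if h : (s.1 : ℕ) + 1 < T then Vq V T q (ext V T s v h) else 0

/-- Autoregressive probability of the finished response `y ⊕ EOS`. -/
noncomputable def pARM (V : Type) [Fintype V] (T : ℕ)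
    (q : Ctx V T × Option V → ℝ) (y : Ctx V T) : ℝ :=
  (∏ i : Fin (y.1 : ℕ), piq V T q (pref V T y i) (some (y.2 i))) * piq V T q y none

/-- Sequence-level reward `R_r(x, y) = ∑_t r(x ⊕ y_{<t}, y_t)` of the finished
response `y ⊕ EOS`. -/
noncomputable def Rr (V : Type) [Fintype V] (T : ℕ)
    (r : Ctx V T × Option V → ℝ) (y : Ctx V T) : ℝ :=
  (∑ i : Fin (y.1 : ℕ), r (pref V T y i, some (y.2 i))) + r (y, none)

/-- Sequence-level log-partition `A^EBM_{R_r}(x)`. -/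
noncomputable def Aebm (V : Type) [Fintype V] (T : ℕ)
    (r : Ctx V T × Option V → ℝ) : ℝ :=
  Real.log (∑ y : Ctx V T, Real.exp (Rr V T r y))

/-- EBM probability of the finished response `y ⊕ EOS`. -/
noncomputable def pEBM (V : Type) [Fintype V] (T : ℕ)
    (r : Ctx V T × Option V → ℝ) (y : Ctx V T) : ℝ :=
  Real.exp (Rr V T r y - Aebm V T r)


/-! ### Auxiliary development -/

section Aux

variable {V : Type} [Fintype V] {T : ℕ}

private lemma ctx_ext' {n m : ℕ} (hn : n < T) (hm : m < T) (h : n = m)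
    (g : Fin n → V) (g' : Fin m → V)
    (hg : ∀ (j : ℕ) (hj : j < n) (hj' : j < m), g ⟨j, hj⟩ = g' ⟨j, hj'⟩) :
    (⟨⟨n, hn⟩, g⟩ : Ctx V T) = ⟨⟨m, hm⟩, g'⟩ := by
  subst h
  have hgg : g = g' := funext fun j => hg j.1 j.2 j.2
  rw [hgg]

/-- Partition function from a context, by backward recursion. -/
private noncomputable def ZZ (V : Type) [Fintype V] (T : ℕ) (r : Ctx V T × Option V → ℝ)
    (t : ℕ) (ht : t < T) (s : Fin t → V) : ℝ :=
  Real.exp (r (⟨⟨t, ht⟩, s⟩, none)) +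
    if h : t + 1 < T then
      ∑ v : V, Real.exp (r (⟨⟨t, ht⟩, s⟩, some v)) * ZZ V T r (t + 1) h (Fin.snoc s v)
    else 0
termination_by T - t
decreasing_by omega

private theorem ZZ_pos (r : Ctx V T × Option V → ℝ) (t : ℕ) (ht : t < T) (s : Fin t → V) :
    0 < ZZ V T r t ht s := by
  rw [ZZ]
  apply lt_of_lt_of_le (Real.exp_pos _)
  apply le_add_of_nonneg_right
  split
  · apply Finset.sum_nonneg
    intro v _
    exact mul_nonneg (Real.exp_pos _).le (ZZ_pos r (t + 1) _ (Fin.snoc s v)).le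
  · exact le_rfl
termination_by T - t
decreasing_by omega

private theorem ZZ_eq (r : Ctx V T × Option V → ℝ) (t : ℕ) (ht : t < T) (s : Fin t → V) :
    ZZ V T r t ht s = ∑ a ∈ adm V T ⟨⟨t, ht⟩, s⟩, Real.exp (Mgo V T r t ht s a) := by
  rw [ZZ]
  show _ = ∑ a ∈ (if t + 1 = T then {none} else Finset.univ), Real.exp (Mgo V T r t ht s a)
  by_cases hE : t + 1 = T
  · rw [if_pos hE, dif_neg (by omega), Finset.sum_singleton, add_zero]
    rw [Mgo]
  · have h1 : t + 1 < T := by omega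
    rw [if_neg hE, dif_pos h1, Fintype.sum_option]
    congr 1
    · rw [Mgo]
    · apply Finset.sum_congr rfl
      intro v _
      rw [Mgo, dif_pos h1, ← ZZ_eq r (t + 1) h1 (Fin.snoc s v),
        Real.exp_add, Real.exp_log (ZZ_pos r (t + 1) h1 (Fin.snoc s v))]
termination_by T - t
decreasing_by omega

/-- The context reached after `i` tokens of the suffix `f` appended to `s`. -/
private def glueC (V : Type) (T : ℕ) (t k : ℕ) (s : Fin t → V) (f : Fin k → V)
    (i : ℕ) (hik : i ≤ k) (hi : t + i < T) : Ctx V T :=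
  ⟨⟨t + i, hi⟩, fun j => if h : (j : ℕ) < t then s ⟨(j : ℕ), h⟩
    else f ⟨(j : ℕ) - t, by have hj : (j : ℕ) < t + i := j.isLt; omega⟩⟩

/-- Reward accumulated along a suffix `f` starting from context `s`. -/
private noncomputable def Rsuf (V : Type) [Fintype V] (T : ℕ) (r : Ctx V T × Option V → ℝ) :
    (k t : ℕ) → (ht : t < T) → (s : Fin t → V) → (hk : t + k < T) → (f : Fin k → V) → ℝ
  | 0, t, ht, s, _, _ => r (⟨⟨t, ht⟩, s⟩, none)
  | k + 1, t, ht, s, hk, f =>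
    r (⟨⟨t, ht⟩, s⟩, some (f 0)) +
      Rsuf V T r k (t + 1) (by omega) (Fin.snoc s (f 0)) (by omega) (fun i => f i.succ)

private lemma glue_zero (t k : ℕ) (ht : t < T) (s : Fin t → V) (f : Fin k → V)
    (hik : 0 ≤ k) (hi : t + 0 < T) :
    glueC V T t k s f 0 hik hi = ⟨⟨t, ht⟩, s⟩ := by
  unfold glueC
  apply ctx_ext' _ _ (by omega)
  intro j hj hj'
  rw [dif_pos hj']

private lemma glue_succ (t k : ℕ) (s : Fin t → V) (f : Fin (k + 1) → V) (i : ℕ)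
    (hik : i + 1 ≤ k + 1) (hik' : i ≤ k) (hi1 : t + (i + 1) < T) (hi2 : t + 1 + i < T) :
    glueC V T t (k + 1) s f (i + 1) hik hi1 =
      glueC V T (t + 1) k (Fin.snoc s (f 0)) (fun j => f j.succ) i hik' hi2 := by
  unfold glueC
  apply ctx_ext' _ _ (by omega)
  intro j hj hj'
  by_cases hjt : j < t
  · rw [dif_pos hjt, dif_pos (show j < t + 1 by omega)]
    simp [Fin.snoc, hjt]
  · rw [dif_neg hjt]
    by_cases hjt1 : j < t + 1
    · have hje : j = t := by omega
      subst hje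
      rw [dif_pos hjt1]
      simp only [Fin.snoc, Fin.castLT]
      rw [dif_neg (by omega : ¬ (j : ℕ) < j)]
      simp only [cast_eq]
      congr 1
      ext
      simp
    · rw [dif_neg hjt1]
      congr 1
      ext
      simp only [Fin.val_succ]
      omega

private theorem Rsuf_eq (r : Ctx V T × Option V → ℝ) :
    ∀ (k t : ℕ) (ht : t < T) (s : Fin t → V) (hk : t + k < T) (f : Fin k → V),
    Rsuf V T r k t ht s hk f =
      (∑ i : Fin k, r (glueC V T t k s f i (le_of_lt i.isLt)
          (by have := i.isLt; omega), some (f i))) +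
        r (glueC V T t k s f k le_rfl hk, none) := by
  intro k
  induction k with
  | zero =>
    intro t ht s hk f
    rw [Rsuf]
    rw [glue_zero t 0 ht s f le_rfl hk]
    simp
  | succ k IH =>
    intro t ht s hk f
    rw [Rsuf, IH (t + 1) (by omega) (Fin.snoc s (f 0)) (by omega) (fun i => f i.succ)]
    rw [Fin.sum_univ_succ]
    simp only [Fin.val_zero, Fin.val_succ]
    rw [glue_zero t (k + 1) ht s f (Nat.zero_le _) (by omega)]
    have hlast : glueC V T (t + 1) k (Fin.snoc s (f 0)) (fun j => f j.succ) k le_rfl (by omega)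
        = glueC V T t (k + 1) s f (k + 1) le_rfl hk :=
      (glue_succ t k s f k le_rfl le_rfl hk (by omega)).symm
    rw [hlast]
    have hmid : ∀ i : Fin k,
        r (glueC V T (t + 1) k (Fin.snoc s (f 0)) (fun j => f j.succ) i (le_of_lt i.isLt)
            (by have := i.isLt; omega), some (f i.succ))
          = r (glueC V T t (k + 1) s f ((i : ℕ) + 1) (by have := i.isLt; omega)
            (by have := i.isLt; omega), some (f i.succ)) := by
      intro i
      rw [glue_succ t k s f i (by have := i.isLt; omega) (le_of_lt i.isLt)
        (by have := i.isLt; omega) (by have := i.isLt; omega)]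
    rw [Finset.sum_congr rfl (fun i _ => hmid i)]
    ring

private theorem sum_Rsuf (r : Ctx V T × Option V → ℝ) (t : ℕ) (ht : t < T) (s : Fin t → V) :
    (∑ k ∈ Finset.range (T - t),
      if hk : t + k < T then ∑ f : Fin k → V, Real.exp (Rsuf V T r k t ht s hk f) else 0)
      = ZZ V T r t ht s := by
  obtain ⟨m, hm⟩ : ∃ m, T - t = m + 1 := ⟨T - t - 1, by omega⟩
  rw [hm, Finset.sum_range_succ', ZZ]
  have h0 : (if hk : t + 0 < T then ∑ f : Fin 0 → V, Real.exp (Rsuf V T r 0 t ht s hk f) else 0)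
      = Real.exp (r (⟨⟨t, ht⟩, s⟩, none)) := by
    rw [dif_pos (show t + 0 < T by omega)]
    rw [Fintype.sum_unique]
    rfl
  rw [h0, add_comm]
  congr 1
  by_cases h1 : t + 1 < T
  · rw [dif_pos h1]
    have hstep : ∀ k ∈ Finset.range m,
        (if hk : t + (k + 1) < T then
            ∑ f : Fin (k + 1) → V, Real.exp (Rsuf V T r (k + 1) t ht s hk f) else 0)
          = ∑ v : V, Real.exp (r (⟨⟨t, ht⟩, s⟩, some v)) *
              (if hk : t + 1 + k < T then
                ∑ f : Fin k → V, Real.exp (Rsuf V T r k (t + 1) h1 (Fin.snoc s v) hk f)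
              else 0) := by
      intro k hkm
      rw [Finset.mem_range] at hkm
      rw [dif_pos (by omega)]
      rw [← Equiv.sum_comp (Fin.consEquiv (fun _ : Fin (k + 1) => V))
        (fun f => Real.exp (Rsuf V T r (k + 1) t ht s (by omega) f))]
      rw [Fintype.sum_prod_type]
      apply Finset.sum_congr rfl
      intro v _
      rw [dif_pos (by omega), Finset.mul_sum]
      apply Finset.sum_congr rfl
      intro g _
      show Real.exp (Rsuf V T r (k + 1) t ht s _ (Fin.cons v g)) = _
      rw [Rsuf]
      simp only [Fin.cons_zero, Fin.cons_succ]
      rw [Real.exp_add]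
    rw [Finset.sum_congr rfl hstep, Finset.sum_comm]
    apply Finset.sum_congr rfl
    intro v _
    rw [← Finset.mul_sum]
    congr 1
    have hm' : m = T - (t + 1) := by omega
    rw [hm']
    exact sum_Rsuf r (t + 1) h1 (Fin.snoc s v)
  · rw [dif_neg h1]
    have hm0 : m = 0 := by omega
    subst hm0
    simp
termination_by T - t
decreasing_by omega


private lemma glue_full (k : ℕ) (hk' : k < T) (f : Fin k → V)
    (hik : k ≤ k) (hi : 0 + k < T) :
    glueC V T 0 k (fun j => j.elim0) f k hik hi = ⟨⟨k, hk'⟩, f⟩ := by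
  unfold glueC
  apply ctx_ext' _ _ (by omega)
  intro j hj hj'
  rw [dif_neg (Nat.not_lt_zero j)]
  congr 1

private lemma glue_pref (k : ℕ) (hk' : k < T) (f : Fin k → V) (i : Fin k)
    (hik : (i : ℕ) ≤ k) (hi : 0 + (i : ℕ) < T) :
    glueC V T 0 k (fun j => j.elim0) f (i : ℕ) hik hi
      = pref V T (⟨⟨k, hk'⟩, f⟩ : Ctx V T) i := by
  unfold glueC pref
  apply ctx_ext' _ _ (by omega)
  intro j hj hj'
  rw [dif_neg (Nat.not_lt_zero j)]
  congr 1

private theorem Rsuf_Rr (r : Ctx V T × Option V → ℝ) (h0 : 0 < T) (k : ℕ)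
    (hk : 0 + k < T) (hk' : k < T) (f : Fin k → V) :
    Rsuf V T r k 0 h0 (fun i => i.elim0) hk f = Rr V T r ⟨⟨k, hk'⟩, f⟩ := by
  rw [Rsuf_eq]
  show _ = (∑ i : Fin k, r (pref V T (⟨⟨k, hk'⟩, f⟩ : Ctx V T) i, some (f i))) +
    r (⟨⟨k, hk'⟩, f⟩, none)
  congr 1
  · apply Finset.sum_congr rfl
    intro i _
    rw [glue_pref k hk' f i (le_of_lt i.isLt) (by have := i.isLt; omega)]
  · rw [glue_full k hk' f le_rfl hk]

private theorem sum_exp_Rr (r : Ctx V T × Option V → ℝ) (h0 : 0 < T) :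
    ∑ y : Ctx V T, Real.exp (Rr V T r y) = ZZ V T r 0 h0 (fun i => i.elim0) := by
  rw [← sum_Rsuf r 0 h0 (fun i => i.elim0)]
  rw [← Fin.sum_univ_eq_sum_range
    (fun k => if hk : 0 + k < T then
      ∑ f : Fin k → V, Real.exp (Rsuf V T r k 0 h0 (fun i => i.elim0) hk f) else 0) (T - 0)]
  rw [← Finset.univ_sigma_univ, Finset.sum_sigma]
  apply Finset.sum_congr rfl
  intro kk _
  rw [dif_pos (show 0 + (kk : ℕ) < T by have := kk.isLt; omega)]
  apply Finset.sum_congr rfl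
  intro f _
  congr 1
  exact (Rsuf_Rr r h0 (kk : ℕ) (by have := kk.isLt; omega) kk.isLt f).symm

/-- Prefix of length `n` of a finished response. -/
private def prefN (y : Ctx V T) (n : ℕ) (h : n ≤ (y.1 : ℕ)) : Ctx V T :=
  ⟨⟨n, lt_of_le_of_lt h y.1.isLt⟩,
    fun j => y.2 ⟨(j : ℕ), by have hj : (j : ℕ) < n := j.isLt; omega⟩⟩

private lemma prefN_last (y : Ctx V T) (h : (y.1 : ℕ) ≤ (y.1 : ℕ)) :
    prefN y (y.1 : ℕ) h = y := by
  obtain ⟨⟨n, hn⟩, g⟩ := y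
  unfold prefN
  apply ctx_ext' _ _ rfl
  intro j hj hj'
  rfl

private lemma pref_prefN (y : Ctx V T) (i : Fin (y.1 : ℕ)) (h : (i : ℕ) ≤ (y.1 : ℕ)) :
    pref V T y i = prefN y (i : ℕ) h := by
  unfold pref prefN
  apply ctx_ext' _ _ rfl
  intro j hj hj'
  congr 1

private lemma ext_prefN (y : Ctx V T) (i : Fin (y.1 : ℕ))
    (h1 : ((pref V T y i).1 : ℕ) + 1 < T) (h2 : (i : ℕ) + 1 ≤ (y.1 : ℕ)) :
    ext V T (pref V T y i) (y.2 i) h1 = prefN y ((i : ℕ) + 1) h2 := by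
  unfold _root_.ext pref prefN
  apply ctx_ext' _ _ rfl
  intro j hj hj'
  by_cases hji : j < (i : ℕ)
  · simp only [Fin.snoc, Fin.castLT]
    rw [dif_pos hji]
    simp only [cast_eq]
    congr 1
  · have hj2 : j < (i : ℕ) + 1 := hj'
    have hje : j = (i : ℕ) := by omega
    simp only [Fin.snoc]
    rw [dif_neg hji]
    apply eq_of_heq
    refine HEq.trans (cast_heq _ _) (heq_of_eq ?_)
    exact congrArg y.snd (Fin.ext hje.symm)

private lemma Mmap_none (r : Ctx V T × Option V → ℝ) (s : Ctx V T) :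
    Mmap V T r (s, none) = r (s, none) := by
  show Mgo V T r (s.1 : ℕ) s.1.isLt s.2 none = _
  rw [Mgo]

private lemma Mmap_some (r : Ctx V T × Option V → ℝ) (y : Ctx V T) (i : Fin (y.1 : ℕ))
    (h2 : (i : ℕ) + 1 ≤ (y.1 : ℕ)) :
    Mmap V T r (pref V T y i, some (y.2 i))
      = r (pref V T y i, some (y.2 i)) + Vq V T (Mmap V T r) (prefN y ((i : ℕ) + 1) h2) := by
  have h1 : (i : ℕ) + 1 < T := by have := y.1.isLt; omega
  show Mgo V T r ((pref V T y i).1 : ℕ) (pref V T y i).1.isLt (pref V T y i).2 (some (y.2 i)) = _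
  rw [Mgo]
  rw [dif_pos (show ((pref V T y i).1 : ℕ) + 1 < T from h1)]
  congr 1
  rw [← ext_prefN y i h1 h2]
  rfl

private noncomputable def gfun (q : Ctx V T × Option V → ℝ) (y : Ctx V T) (n : ℕ) : ℝ :=
  if h : n ≤ (y.1 : ℕ) then Vq V T q (prefN y n h) else 0

private lemma gfun_eq (q : Ctx V T × Option V → ℝ) (y : Ctx V T) (n : ℕ)
    (h : n ≤ (y.1 : ℕ)) : gfun q y n = Vq V T q (prefN y n h) := dif_pos h

private theorem pARM_eq (r : Ctx V T × Option V → ℝ) (y : Ctx V T) :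
    pARM V T (Mmap V T r) y
      = Real.exp (Rr V T r y - Vq V T (Mmap V T r) (prefN y 0 (Nat.zero_le _))) := by
  rw [pARM]
  simp only [piq]
  rw [← Real.exp_sum, ← Real.exp_add]
  congr 1
  have hterm : ∀ i : Fin (y.1 : ℕ),
      Mmap V T r (pref V T y i, some (y.2 i)) - Vq V T (Mmap V T r) (pref V T y i)
        = r (pref V T y i, some (y.2 i))
            + (gfun (Mmap V T r) y ((i : ℕ) + 1) - gfun (Mmap V T r) y (i : ℕ)) := by
    intro i
    have hi1 : (i : ℕ) + 1 ≤ (y.1 : ℕ) := i.isLt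
    rw [gfun_eq _ _ _ hi1, gfun_eq _ _ _ (le_of_lt i.isLt)]
    rw [Mmap_some r y i hi1]
    rw [pref_prefN y i (le_of_lt i.isLt)]
    ring
  rw [Finset.sum_congr rfl (fun i _ => hterm i)]
  rw [Finset.sum_add_distrib]
  have htel : ∑ i : Fin (y.1 : ℕ),
      (gfun (Mmap V T r) y ((i : ℕ) + 1) - gfun (Mmap V T r) y (i : ℕ))
        = gfun (Mmap V T r) y (y.1 : ℕ) - gfun (Mmap V T r) y 0 := by
    rw [Fin.sum_univ_eq_sum_range
      (fun n => gfun (Mmap V T r) y (n + 1) - gfun (Mmap V T r) y n) (y.1 : ℕ)]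
    exact Finset.sum_range_sub (gfun (Mmap V T r) y) (y.1 : ℕ)
  rw [htel]
  rw [gfun_eq _ _ _ (le_refl (y.1 : ℕ)), gfun_eq _ _ _ (Nat.zero_le _)]
  rw [prefN_last y (le_refl _)]
  rw [Mmap_none r y, Rr]
  ring

end Aux

/-- **Bijection between EBMs and ARMs (equality of distributions).**
If `q = M(r)`, then for every finished response `y` one has
`p^EBM_{R_r}(y | x) = p^ARM_q(y | x)`. -/
theorem ebm_eq_arm (V : Type) [Fintype V] (T : ℕ) (hT : 1 ≤ T)
    (r q : Ctx V T × Option V → ℝ) (hq : q = Mmap V T r) (y : Ctx V T) :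
    pEBM V T r y = pARM V T q y := by
  subst hq
  have h0T : 0 < T := hT
  rw [pEBM, pARM_eq r y]
  congr 2
  rw [Aebm, sum_exp_Rr r h0T]
  have hv : Vq V T (Mmap V T r) (prefN y 0 (Nat.zero_le _))
      = Real.log (ZZ V T r 0 h0T (fun i => i.elim0)) := by
    rw [Vq]
    congr 1
    rw [ZZ_eq r 0 h0T (fun i => i.elim0)]
    have hc : prefN y 0 (Nat.zero_le _) = (⟨⟨0, h0T⟩, fun i => i.elim0⟩ : Ctx V T) := by
      unfold prefN
      apply ctx_ext' _ _ rfl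
      intro j hj hj'
      exact absurd hj' (Nat.not_lt_zero j)
    rw [hc]
    rfl
  rw [hv]
end

section
/- Bijection between EBMs and ARMs (equality of log-partitions): if q = M(r), then the sequence-level log-partition of the EBM equals the soft value of the ARM at the prompt, A^EBM_{R_r}(x) = V_q(x). -/
open Finset

/-! ### Auxiliary development for the proof -/

section AuxProof

variable (V : Type) [Fintype V] (T : ℕ)

/-- Extensionality for contexts with possibly different (but equal) lengths. -/
lemma ctx_ext'_s3 {a b : ℕ} (ha : a < T) (hb : b < T) (h : a = b)
    {f : Fin a → V} {g : Fin b → V} (hfg : ∀ i : Fin a, f i = g (Fin.cast h i)) :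
    (⟨⟨a, ha⟩, f⟩ : Ctx V T) = ⟨⟨b, hb⟩, g⟩ := by
  subst h
  have : f = g := funext fun i => by simpa using hfg i
  rw [this]

lemma append_apply_left {t m : ℕ} (s : Fin t → V) (f : Fin m → V)
    (i : Fin (t + m)) (h : (i : ℕ) < t) : Fin.append s f i = s ⟨i, h⟩ := by
  have : i = Fin.castAdd m ⟨(i : ℕ), h⟩ := by ext; rfl
  conv_lhs => rw [this]
  rw [Fin.append_left]

lemma snoc_castLE' {t : ℕ} (s : Fin t → V) (v : V) {m : ℕ} (h : m ≤ t) (j : Fin m) :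
    (Fin.snoc s v : Fin (t + 1) → V) (Fin.castLE (h.trans (Nat.le_succ t)) j) =
      s (Fin.castLE h j) := by
  have : Fin.castLE (h.trans (Nat.le_succ t)) j = Fin.castSucc (Fin.castLE h j) := rfl
  rw [this, Fin.snoc_castSucc]

lemma snoc_castSucc' {t : ℕ} (s : Fin t → V) (v : V) (i : Fin t) :
    (Fin.snoc s v : Fin (t + 1) → V) i.castSucc = s i := Fin.snoc_castSucc _ _ _

lemma snoc_last' {t : ℕ} (s : Fin t → V) (v : V) :
    (Fin.snoc s v : Fin (t + 1) → V) (Fin.last t) = v := Fin.snoc_last _ _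

variable (r : Ctx V T × Option V → ℝ)

/-- Suffix partition function, by recursion on the remaining length `n`. -/
noncomputable def Zfun : ∀ (n t : ℕ), t + n + 1 = T → (Fin t → V) → ℝ
  | 0, t, ht, s => Real.exp (r (⟨⟨t, by omega⟩, s⟩, none))
  | n + 1, t, ht, s =>
      Real.exp (r (⟨⟨t, by omega⟩, s⟩, none)) +
        ∑ v : V, Real.exp (r (⟨⟨t, by omega⟩, s⟩, some v)) *
          Zfun n (t + 1) (by omega) (Fin.snoc s v)

lemma Zfun_pos : ∀ (n t : ℕ) (ht : t + n + 1 = T) (s : Fin t → V),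
    0 < Zfun V T r n t ht s
  | 0, t, ht, s => Real.exp_pos _
  | n + 1, t, ht, s => by
      rw [Zfun]
      refine add_pos_of_pos_of_nonneg (Real.exp_pos _)
        (Finset.sum_nonneg fun v _ => le_of_lt ?_)
      exact mul_pos (Real.exp_pos _) (Zfun_pos (n) (t + 1) (by omega) (Fin.snoc s v))

/-- The soft value of `M(r)` equals the suffix partition function. -/
lemma sum_Mgo_eq_Zfun : ∀ (n t : ℕ) (ht : t + n + 1 = T) (s : Fin t → V),
    ∑ a ∈ adm V T ⟨⟨t, by omega⟩, s⟩,
      Real.exp (Mgo V T r t (by omega) s a) = Zfun V T r n t ht s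
  | 0, t, ht, s => by
      have h1 : t + 1 = T := by omega
      rw [adm, if_pos h1, Finset.sum_singleton, Zfun, Mgo]
  | n + 1, t, ht, s => by
      have h1 : ¬ (t + 1 = T) := by omega
      have h2 : t + 1 < T := by omega
      rw [adm, if_neg h1, Fintype.sum_option, Zfun, Mgo]
      congr 1
      refine Finset.sum_congr rfl fun v _ => ?_
      rw [Mgo, dif_pos h2, Real.exp_add,
        sum_Mgo_eq_Zfun n (t + 1) (by omega) (Fin.snoc s v),
        Real.exp_log (Zfun_pos V T r n (t + 1) (by omega) (Fin.snoc s v))]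

/-- Prefix reward. -/
noncomputable def Pr (y : Ctx V T) : ℝ :=
  ∑ i : Fin (y.1 : ℕ), r (pref V T y i, some (y.2 i))

lemma Rr_eq_Pr (y : Ctx V T) : Rr V T r y = Pr V T r y + r (y, none) := rfl

lemma pref_snoc_castSucc (t : ℕ) (ht : t + 1 < T) (ht' : t < T)
    (s : Fin t → V) (v : V) (i : Fin t) :
    pref V T ⟨⟨t + 1, ht⟩, Fin.snoc s v⟩ (Fin.castSucc i) =
      pref V T ⟨⟨t, ht'⟩, s⟩ i := by
  refine ctx_ext'_s3 V T _ _ rfl fun j => ?_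
  exact snoc_castLE' V s v (le_of_lt i.isLt) j

lemma pref_snoc_last (t : ℕ) (ht : t + 1 < T) (ht' : t < T)
    (s : Fin t → V) (v : V) :
    pref V T ⟨⟨t + 1, ht⟩, Fin.snoc s v⟩ (Fin.last t) = ⟨⟨t, ht'⟩, s⟩ := by
  refine ctx_ext'_s3 V T _ _ rfl fun j => ?_
  exact snoc_castLE' V s v (le_refl t) j

lemma Pr_snoc (t : ℕ) (ht : t + 1 < T) (ht' : t < T) (s : Fin t → V) (v : V) :
    Pr V T r ⟨⟨t + 1, ht⟩, Fin.snoc s v⟩ =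
      Pr V T r ⟨⟨t, ht'⟩, s⟩ + r (⟨⟨t, ht'⟩, s⟩, some v) := by
  show (∑ i : Fin (t + 1), _) = _
  rw [Fin.sum_univ_castSucc]
  congr 1
  · refine Finset.sum_congr rfl fun i _ => ?_
    rw [pref_snoc_castSucc V T t ht ht']
    exact congrArg (fun z => r (pref V T ⟨⟨t, ht'⟩, s⟩ i, some z)) (snoc_castSucc' V s v i)
  · rw [pref_snoc_last V T t ht ht']
    exact congrArg (fun z => r (⟨⟨t, ht'⟩, s⟩, some z)) (snoc_last' V s v)

/-- Gluing a context with a completion. -/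
def glue (n t : ℕ) (ht : t + n + 1 = T) (s : Fin t → V)
    (p : Σ k : Fin (n + 1), Fin (k : ℕ) → V) : Ctx V T :=
  ⟨⟨t + (p.1 : ℕ), by have := p.1.isLt; omega⟩, Fin.append s p.2⟩

lemma sum_fun_zero {m : ℕ} (hm : m = 0) (g : (Fin m → V) → ℝ) (c : ℝ)
    (hc : ∀ f, g f = c) : ∑ f : Fin m → V, g f = c := by
  subst hm
  rw [Fintype.sum_unique]
  exact hc _

lemma glue_cons (n t : ℕ) (ht : t + (n + 1) + 1 = T) (h2 : t + 1 + n + 1 = T)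
    (s : Fin t → V) (v : V) (k : Fin (n + 1)) (f : Fin (k : ℕ) → V) :
    glue V T (n + 1) t ht s ⟨Fin.succ k, Fin.cons v f⟩ =
      glue V T n (t + 1) h2 (Fin.snoc s v) ⟨k, f⟩ := by
  refine ctx_ext'_s3 V T _ _ (by show t + ((k : ℕ) + 1) = t + 1 + (k : ℕ); omega) fun i => ?_
  show Fin.append s (Fin.cons v f) i = Fin.append (Fin.snoc s v) f _
  rw [Fin.append_right_cons]
  rfl

/-- Key induction: prefix reward times suffix partition equals the sum over
completions of the exponentiated total reward. -/
lemma exp_Pr_mul_Zfun : ∀ (n t : ℕ) (ht : t + n + 1 = T) (s : Fin t → V),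
    Real.exp (Pr V T r ⟨⟨t, by omega⟩, s⟩) * Zfun V T r n t ht s =
      ∑ p : Σ k : Fin (n + 1), Fin (k : ℕ) → V,
        Real.exp (Rr V T r (glue V T n t ht s p))
  | 0, t, ht, s => by
      rw [Zfun, ← Real.exp_add, ← Finset.univ_sigma_univ, Finset.sum_sigma, Fin.sum_univ_one]
      refine (sum_fun_zero V rfl _ _ fun f => ?_).symm
      have hg : glue V T 0 t ht s ⟨0, f⟩ = ⟨⟨t, by omega⟩, s⟩ := by
        refine ctx_ext'_s3 V T _ _ (by omega) fun i => ?_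
        exact append_apply_left V s f i (by have := i.isLt; omega)
      rw [hg, Rr_eq_Pr]
  | n + 1, t, ht, s => by
      have h2 : t + 1 + n + 1 = T := by omega
      rw [Zfun, mul_add, ← Real.exp_add, Finset.mul_sum,
        ← Finset.univ_sigma_univ, Finset.sum_sigma, Fin.sum_univ_succ]
      congr 1
      · refine (sum_fun_zero V rfl _ _ fun f => ?_).symm
        have hg : glue V T (n + 1) t ht s ⟨0, f⟩ = ⟨⟨t, by omega⟩, s⟩ :=
          ctx_ext'_s3 V T _ _ rfl fun i => append_apply_left V s f i i.isLt
        rw [hg, Rr_eq_Pr]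
      · have hL : ∀ v : V,
            Real.exp (Pr V T r ⟨⟨t, by omega⟩, s⟩) *
              (Real.exp (r (⟨⟨t, by omega⟩, s⟩, some v)) *
                Zfun V T r n (t + 1) (by omega) (Fin.snoc s v)) =
            ∑ k : Fin (n + 1), ∑ f : Fin (k : ℕ) → V,
              Real.exp (Rr V T r (glue V T n (t + 1) h2 (Fin.snoc s v) ⟨k, f⟩)) := fun v => by
          rw [← mul_assoc, ← Real.exp_add, ← Pr_snoc V T r t (by omega) (by omega) s v,
            exp_Pr_mul_Zfun n (t + 1) h2 (Fin.snoc s v),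
            ← Finset.univ_sigma_univ, Finset.sum_sigma]
        refine Eq.trans (Finset.sum_congr rfl fun v _ => hL v) ?_
        rw [Finset.sum_comm]
        refine Finset.sum_congr rfl fun k _ => ?_
        refine Eq.symm ((Equiv.sum_comp (Fin.consEquiv fun _ => V) _).symm.trans
          (Eq.trans (Fintype.sum_prod_type _) ?_))
        refine Finset.sum_congr rfl fun v _ => Finset.sum_congr rfl fun f _ => ?_
        exact congrArg (fun z => Real.exp (Rr V T r z)) (glue_cons V T n t ht h2 s v k f)

end AuxProof

/-- **Bijection between EBMs and ARMs (equality of log-partitions).**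
If `q = M(r)`, then the sequence-level log-partition of the EBM equals the soft
value of the ARM at the prompt (the empty context): `A^EBM_{R_r}(x) = V_q(x)`. -/
theorem ebm_logpartition_eq_value (V : Type) [Fintype V] (T : ℕ) (hT : 1 ≤ T)
    (r q : Ctx V T × Option V → ℝ) (hq : q = Mmap V T r) :
    Aebm V T r = Vq V T q ⟨⟨0, hT⟩, Fin.elim0⟩ := by
  subst hq
  have hT' : 0 + (T - 1) + 1 = T := by omega
  have hZ := sum_Mgo_eq_Zfun V T r (T - 1) 0 hT' Fin.elim0
  have hD := exp_Pr_mul_Zfun V T r (T - 1) 0 hT' Fin.elim0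
  have hP : ∀ pf : 0 < T, Pr V T r ⟨⟨0, pf⟩, Fin.elim0⟩ = 0 := fun pf =>
    Fin.sum_univ_zero _
  have hE : ∑ p : Σ k : Fin (T - 1 + 1), Fin (k : ℕ) → V,
      Real.exp (Rr V T r (glue V T (T - 1) 0 hT' Fin.elim0 p)) =
      ∑ y : Ctx V T, Real.exp (Rr V T r y) := by
    refine Fintype.sum_equiv
      ⟨fun p => ⟨⟨(p.1 : ℕ), by have := p.1.isLt; omega⟩, p.2⟩,
       fun y => ⟨⟨(y.1 : ℕ), by have := y.1.isLt; omega⟩, y.2⟩,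
       fun p => rfl, fun y => rfl⟩ _ _ fun p => ?_
    refine congrArg (fun z => Real.exp (Rr V T r z)) ?_
    refine ctx_ext'_s3 V T _ _ (by omega) fun i => ?_
    rw [Fin.elim0_append]
    rfl
  have h1 : Aebm V T r = Real.log (Zfun V T r (T - 1) 0 hT' Fin.elim0) := by
    refine congrArg Real.log ?_
    rw [← hE, ← hD, hP, Real.exp_zero, one_mul]
  have h2 : Vq V T (Mmap V T r) ⟨⟨0, hT⟩, Fin.elim0⟩ =
      Real.log (Zfun V T r (T - 1) 0 hT' Fin.elim0) := congrArg Real.log hZ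
  exact h1.trans h2.symm
end

section
/- Chain rule of entropy under stochastic transition dynamics: with S, A finite, transition kernel μ, full-support policy π, fixed initial state s₁ and horizon T, let p be the trajectory distribution p(τ|s₁) = Π_{t=1}^T π(a_t|s_t)·μ(s_{t+1}|s_t,a_t). Then H(p(·|s₁)) = Σ_{t=1}^T [ Σ_{s} p_t(s|s₁)·H(π(·|s)) + Σ_{s,a} p_t(s|s₁)·π(a|s)·H(μ(·|s,a)) ], where p_t(s|s₁) is the marginal probability under p of being in state s at time t, and H is the Shannon entropy. -/
open Finset

/-- The state at (1-indexed) time `t + 1` along a trajectory: the initial state `s₁`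
at time `1`, and thereafter the recorded successor states. -/
def stateAt (S : Type) (T : ℕ) (s₁ : S) (ss : Fin T → S) (t : Fin T) : S :=
  if h : (t : ℕ) = 0 then s₁ else ss ⟨(t : ℕ) - 1, by omega⟩

/-- Probability of the trajectory `τ = (a_1, s_2, …, a_T, s_{T+1})` (encoded as the
pair of its action and successor-state sequences):
`p(τ | s₁) = ∏_{t=1}^T π(a_t | s_t) ⬝ μ(s_{t+1} | s_t, a_t)`. -/
noncomputable def trajProb (S A : Type) [Fintype S] [Fintype A] (T : ℕ)
    (π : S → A → ℝ) (μ : S → A → S → ℝ) (s₁ : S)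
    (τ : (Fin T → A) × (Fin T → S)) : ℝ :=
  ∏ t : Fin T,
    π (stateAt S T s₁ τ.2 t) (τ.1 t) * μ (stateAt S T s₁ τ.2 t) (τ.1 t) (τ.2 t)

/-- Marginal probability, under the trajectory distribution, that the state at
(1-indexed) time `t + 1` equals `s`. -/
noncomputable def stateMarginal (S A : Type) [Fintype S] [Fintype A] [DecidableEq S]
    (T : ℕ) (π : S → A → ℝ) (μ : S → A → S → ℝ) (s₁ : S) (t : Fin T) (s : S) : ℝ :=
  ∑ τ ∈ Finset.univ.filter
      (fun τ : (Fin T → A) × (Fin T → S) => stateAt S T s₁ τ.2 t = s),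
    trajProb S A T π μ s₁ τ


section Aux
variable {S A : Type} [Fintype S] [Fintype A] [DecidableEq S]
set_option linter.unusedSectionVars false

lemma mul_log_mul' (x y : ℝ) :
    (x * y) * Real.log (x * y) = (x * y) * Real.log x + (x * y) * Real.log y := by
  rcases eq_or_ne x 0 with rfl | hx
  · simp
  rcases eq_or_ne y 0 with rfl | hy
  · simp
  rw [Real.log_mul hx hy]; ring

lemma stateAt_cons_zero (T : ℕ) (s₁ s₂ : S) (ss : Fin T → S) :
    stateAt S (T + 1) s₁ (Fin.cons s₂ ss) 0 = s₁ := by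
  simp [stateAt]

lemma stateAt_zero (T : ℕ) (s₁ : S) (ss : Fin (T + 1) → S) :
    stateAt S (T + 1) s₁ ss 0 = s₁ := by
  simp [stateAt]

lemma stateAt_cons_succ (T : ℕ) (s₁ s₂ : S) (ss : Fin T → S) (t : Fin T) :
    stateAt S (T + 1) s₁ (Fin.cons s₂ ss) t.succ = stateAt S T s₂ ss t := by
  rcases t with ⟨k, hk⟩
  cases k with
  | zero =>
      show stateAt S (T+1) s₁ (Fin.cons s₂ ss) ⟨1, by omega⟩ = _
      simp [stateAt, Fin.cons]
  | succ k =>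
      show stateAt S (T+1) s₁ (Fin.cons s₂ ss) ⟨k+2, by omega⟩ = _
      simp only [stateAt]
      rw [dif_neg (by omega), dif_neg (by omega)]
      have : (⟨k + 2 - 1, by omega⟩ : Fin (T+1)) = Fin.succ ⟨k, by omega⟩ := by
        ext; simp
      rw [this, Fin.cons_succ]
      congr 1

lemma trajProb_cons (T : ℕ) (π : S → A → ℝ) (μ : S → A → S → ℝ) (s₁ : S)
    (a₀ : A) (s₂ : S) (a : Fin T → A) (ss : Fin T → S) :
    trajProb S A (T + 1) π μ s₁ (Fin.cons a₀ a, Fin.cons s₂ ss)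
      = π s₁ a₀ * μ s₁ a₀ s₂ * trajProb S A T π μ s₂ (a, ss) := by
  unfold trajProb
  rw [Fin.prod_univ_succ]
  simp only [stateAt_cons_succ, stateAt_cons_zero, Fin.cons_zero, Fin.cons_succ]

lemma sum_cons_decomp (T : ℕ) (f : (Fin (T + 1) → A) × (Fin (T + 1) → S) → ℝ) :
    ∑ τ, f τ = ∑ a₀ : A, ∑ s₂ : S, ∑ τ' : (Fin T → A) × (Fin T → S),
      f (Fin.cons a₀ τ'.1, Fin.cons s₂ τ'.2) := by
  rw [Fintype.sum_prod_type]
  rw [← Equiv.sum_comp (Fin.consEquiv fun _ => A) (fun g => ∑ ss, f (g, ss))]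
  rw [Fintype.sum_prod_type]
  have : ∀ a₀ (aa : Fin T → A),
      (∑ ss : Fin (T+1) → S, f (Fin.cons a₀ aa, ss))
        = ∑ s₂ : S, ∑ ss : Fin T → S, f (Fin.cons a₀ aa, Fin.cons s₂ ss) := by
    intro a₀ aa
    rw [← Equiv.sum_comp (Fin.consEquiv fun _ => S)
      (fun ss => f (Fin.cons a₀ aa, ss)), Fintype.sum_prod_type]
    rfl
  simp only [Fin.consEquiv, Equiv.coe_fn_mk]
  simp only [this]
  simp only [Fintype.sum_prod_type]
  exact Finset.sum_congr rfl fun a₀ _ => Finset.sum_comm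


lemma sum_comm3 {ι κ ν : Type} [Fintype ι] [Fintype κ] [Fintype ν]
    (g : ι → κ → ν → ℝ) :
    ∑ i, ∑ k, ∑ n, g i k n = ∑ n, ∑ i, ∑ k, g i k n := by
  calc ∑ i, ∑ k, ∑ n, g i k n = ∑ i, ∑ n, ∑ k, g i k n :=
        Finset.sum_congr rfl fun i _ => Finset.sum_comm
    _ = ∑ n, ∑ i, ∑ k, g i k n := Finset.sum_comm

lemma sum_trajProb (T : ℕ) (π : S → A → ℝ) (μ : S → A → S → ℝ)
    (hμ1 : ∀ s a, ∑ s', μ s a s' = 1) (hπ1 : ∀ s, ∑ a, π s a = 1) (s₁ : S) :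
    ∑ τ : (Fin T → A) × (Fin T → S), trajProb S A T π μ s₁ τ = 1 := by
  induction T generalizing s₁ with
  | zero => simp [trajProb]
  | succ T ih =>
      rw [sum_cons_decomp]
      simp only [trajProb_cons]
      have h : ∀ (a₀ : A) (s₂ : S),
          ∑ τ' : (Fin T → A) × (Fin T → S),
            π s₁ a₀ * μ s₁ a₀ s₂ * trajProb S A T π μ s₂ τ'
            = π s₁ a₀ * μ s₁ a₀ s₂ := by
        intro a₀ s₂
        rw [← Finset.mul_sum, ih s₂, mul_one]
      simp only [h, ← Finset.mul_sum, hμ1, mul_one, hπ1]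

lemma stateMarginal_zero (T : ℕ) (π : S → A → ℝ) (μ : S → A → S → ℝ)
    (hμ1 : ∀ s a, ∑ s', μ s a s' = 1) (hπ1 : ∀ s, ∑ a, π s a = 1) (s₁ s : S) :
    stateMarginal S A (T + 1) π μ s₁ 0 s = if s₁ = s then 1 else 0 := by
  unfold stateMarginal
  rw [Finset.sum_filter]
  simp only [stateAt_zero]
  by_cases h : s₁ = s
  · subst h; simp [sum_trajProb (T+1) π μ hμ1 hπ1 s₁]
  · simp [h]

lemma stateMarginal_succ (T : ℕ) (π : S → A → ℝ) (μ : S → A → S → ℝ)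
    (s₁ : S) (t : Fin T) (s : S) :
    stateMarginal S A (T + 1) π μ s₁ t.succ s
      = ∑ a₀ : A, ∑ s₂ : S,
          π s₁ a₀ * μ s₁ a₀ s₂ * stateMarginal S A T π μ s₂ t s := by
  unfold stateMarginal
  rw [Finset.sum_filter, sum_cons_decomp]
  simp only [stateAt_cons_succ, trajProb_cons]
  simp only [Finset.sum_filter, Finset.mul_sum, mul_ite, mul_zero]

lemma swap_helper {ι : Type} [Fintype ι] (P : A → S → ℝ) (f : S → ι → ℝ) (c : ι → ℝ) :
    ∑ i, (∑ a₀, ∑ s₂, P a₀ s₂ * f s₂ i) * c i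
      = ∑ a₀, ∑ s₂, P a₀ s₂ * ∑ i, f s₂ i * c i := by
  simp only [Finset.sum_mul, Finset.mul_sum, mul_assoc]
  exact (sum_comm3 fun a₀ s₂ i => P a₀ s₂ * (f s₂ i * c i)).symm

end Aux

/-- **Chain rule of entropy under stochastic transition dynamics.**
For finite `S`, `A`, a transition kernel `μ`, a full-support policy `π`, a fixed
initial state `s₁` and horizon `T`, the Shannon entropy of the induced trajectory
distribution equals
`∑_{t=1}^T [∑_s p_t(s|s₁) H(π(·|s)) + ∑_{s,a} p_t(s|s₁) π(a|s) H(μ(·|s,a))]`. -/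
theorem entropy_chain_rule_trajectories (S A : Type) [Fintype S] [Fintype A]
    [DecidableEq S] (T : ℕ) (μ : S → A → S → ℝ) (π : S → A → ℝ) (s₁ : S)
    (hμ0 : ∀ s a s', 0 ≤ μ s a s') (hμ1 : ∀ s a, ∑ s', μ s a s' = 1)
    (hπ : ∀ s a, 0 < π s a) (hπ1 : ∀ s, ∑ a, π s a = 1) :
    (-∑ τ : (Fin T → A) × (Fin T → S),
        trajProb S A T π μ s₁ τ * Real.log (trajProb S A T π μ s₁ τ)) =
      ∑ t : Fin T,
        ((∑ s : S, stateMarginal S A T π μ s₁ t s *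
            (-∑ a, π s a * Real.log (π s a))) +
          ∑ s : S, ∑ a : A, stateMarginal S A T π μ s₁ t s * π s a *
            (-∑ s', μ s a s' * Real.log (μ s a s'))) := by
  induction T generalizing s₁ with
  | zero => simp [trajProb]
  | succ T ih =>
    have hq1 : ∀ s₂ : S,
        ∑ τ' : (Fin T → A) × (Fin T → S), trajProb S A T π μ s₂ τ' = 1 :=
      sum_trajProb T π μ hμ1 hπ1
    set R : S → ℝ := fun s₂ => ∑ t : Fin T,
        ((∑ s : S, stateMarginal S A T π μ s₂ t s *
            (-∑ a, π s a * Real.log (π s a))) +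
          ∑ s : S, ∑ a : A, stateMarginal S A T π μ s₂ t s * π s a *
            (-∑ s', μ s a s' * Real.log (μ s a s'))) with hR
    have hih : ∀ s₂ : S,
        ∑ τ' : (Fin T → A) × (Fin T → S),
          trajProb S A T π μ s₂ τ' * Real.log (trajProb S A T π μ s₂ τ')
          = -(R s₂) := by
      intro s₂
      have := ih s₂
      linarith [this]
    -- decompose the LHS over the first step
    rw [sum_cons_decomp (f := fun τ => trajProb S A (T+1) π μ s₁ τ *
        Real.log (trajProb S A (T+1) π μ s₁ τ))]
    simp only [trajProb_cons]
    have h1 : ∀ (a₀ : A) (s₂ : S),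
        ∑ τ' : (Fin T → A) × (Fin T → S),
          π s₁ a₀ * μ s₁ a₀ s₂ * trajProb S A T π μ s₂ τ' *
            Real.log (π s₁ a₀ * μ s₁ a₀ s₂ * trajProb S A T π μ s₂ τ')
        = π s₁ a₀ * μ s₁ a₀ s₂ * Real.log (π s₁ a₀ * μ s₁ a₀ s₂)
          + π s₁ a₀ * μ s₁ a₀ s₂ * (-(R s₂)) := by
      intro a₀ s₂
      have e1 : ∀ τ' : (Fin T → A) × (Fin T → S),
          π s₁ a₀ * μ s₁ a₀ s₂ * trajProb S A T π μ s₂ τ' *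
            Real.log (π s₁ a₀ * μ s₁ a₀ s₂ * trajProb S A T π μ s₂ τ')
          = (π s₁ a₀ * μ s₁ a₀ s₂ * Real.log (π s₁ a₀ * μ s₁ a₀ s₂)) *
              trajProb S A T π μ s₂ τ'
            + π s₁ a₀ * μ s₁ a₀ s₂ *
              (trajProb S A T π μ s₂ τ' * Real.log (trajProb S A T π μ s₂ τ')) := by
        intro τ'
        have h := mul_log_mul' (π s₁ a₀ * μ s₁ a₀ s₂) (trajProb S A T π μ s₂ τ')
        rw [h]; ring
      rw [Finset.sum_congr rfl fun τ' _ => e1 τ', Finset.sum_add_distrib,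
        ← Finset.mul_sum, ← Finset.mul_sum, hq1 s₂, mul_one, hih s₂]
    simp only [h1]
    -- first-step entropy
    have h2 : ∑ a₀ : A, ∑ s₂ : S,
        π s₁ a₀ * μ s₁ a₀ s₂ * Real.log (π s₁ a₀ * μ s₁ a₀ s₂)
        = (∑ a₀, π s₁ a₀ * Real.log (π s₁ a₀))
          + ∑ a₀, π s₁ a₀ * ∑ s₂, μ s₁ a₀ s₂ * Real.log (μ s₁ a₀ s₂) := by
      rw [← Finset.sum_add_distrib]
      refine Finset.sum_congr rfl fun a₀ _ => ?_
      have e2 : ∀ s₂ : S,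
          π s₁ a₀ * μ s₁ a₀ s₂ * Real.log (π s₁ a₀ * μ s₁ a₀ s₂)
          = (π s₁ a₀ * Real.log (π s₁ a₀)) * μ s₁ a₀ s₂
            + π s₁ a₀ * (μ s₁ a₀ s₂ * Real.log (μ s₁ a₀ s₂)) := by
        intro s₂
        have h := mul_log_mul' (π s₁ a₀) (μ s₁ a₀ s₂)
        rw [h]; ring
      rw [Finset.sum_congr rfl fun s₂ _ => e2 s₂, Finset.sum_add_distrib,
        ← Finset.mul_sum, ← Finset.mul_sum, hμ1, mul_one]
    -- decompose the RHS over time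
    rw [Fin.sum_univ_succ]
    simp only [stateMarginal_zero T π μ hμ1 hπ1 s₁, stateMarginal_succ,
      ite_mul, one_mul, zero_mul, Finset.sum_ite_eq, Finset.mem_univ, if_true]
    have h0 : (∑ x : S, ∑ a : A, if s₁ = x then
          π x a * (-∑ s', μ x a s' * Real.log (μ x a s')) else 0)
        = ∑ a : A, π s₁ a * (-∑ s', μ s₁ a s' * Real.log (μ s₁ a s')) := by
      have e : ∀ x : S, (∑ a : A, if s₁ = x then
            π x a * (-∑ s', μ x a s' * Real.log (μ x a s')) else 0)
          = if s₁ = x then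
              (∑ a : A, π x a * (-∑ s', μ x a s' * Real.log (μ x a s'))) else 0 := by
        intro x; split <;> simp
      simp only [e, Finset.sum_ite_eq, Finset.mem_univ, if_true]
    have h3 : ∑ t : Fin T,
        ((∑ s : S, (∑ a₀ : A, ∑ s₂ : S,
            π s₁ a₀ * μ s₁ a₀ s₂ * stateMarginal S A T π μ s₂ t s) *
            (-∑ a, π s a * Real.log (π s a))) +
          ∑ s : S, ∑ a : A, (∑ a₀ : A, ∑ s₂ : S,
            π s₁ a₀ * μ s₁ a₀ s₂ * stateMarginal S A T π μ s₂ t s) * π s a *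
            (-∑ s', μ s a s' * Real.log (μ s a s')))
        = ∑ a₀ : A, ∑ s₂ : S, π s₁ a₀ * μ s₁ a₀ s₂ * R s₂ := by
      have piece1 : ∀ t : Fin T,
          (∑ s : S, (∑ a₀ : A, ∑ s₂ : S,
              π s₁ a₀ * μ s₁ a₀ s₂ * stateMarginal S A T π μ s₂ t s) *
              (-∑ a, π s a * Real.log (π s a)))
          = ∑ a₀ : A, ∑ s₂ : S, π s₁ a₀ * μ s₁ a₀ s₂ *
              ∑ s : S, stateMarginal S A T π μ s₂ t s *
                (-∑ a, π s a * Real.log (π s a)) :=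
        fun t => swap_helper (fun a₀ s₂ => π s₁ a₀ * μ s₁ a₀ s₂)
          (fun s₂ s => stateMarginal S A T π μ s₂ t s) _
      have collapse : ∀ (Q : ℝ) (s : S),
          (∑ a : A, Q * π s a * (-∑ s', μ s a s' * Real.log (μ s a s')))
          = Q * ∑ a : A, π s a * (-∑ s', μ s a s' * Real.log (μ s a s')) := by
        intro Q s; rw [Finset.mul_sum]
        exact Finset.sum_congr rfl fun a _ => mul_assoc _ _ _
      have piece2 : ∀ t : Fin T,
          (∑ s : S, ∑ a : A, (∑ a₀ : A, ∑ s₂ : S,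
              π s₁ a₀ * μ s₁ a₀ s₂ * stateMarginal S A T π μ s₂ t s) * π s a *
              (-∑ s', μ s a s' * Real.log (μ s a s')))
          = ∑ a₀ : A, ∑ s₂ : S, π s₁ a₀ * μ s₁ a₀ s₂ *
              ∑ s : S, ∑ a : A, stateMarginal S A T π μ s₂ t s * π s a *
                (-∑ s', μ s a s' * Real.log (μ s a s')) := by
        intro t
        rw [Finset.sum_congr rfl fun s _ => collapse _ s]
        rw [swap_helper (fun a₀ s₂ => π s₁ a₀ * μ s₁ a₀ s₂)
          (fun s₂ s => stateMarginal S A T π μ s₂ t s)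
          (fun s => ∑ a : A, π s a * (-∑ s', μ s a s' * Real.log (μ s a s')))]
        refine Finset.sum_congr rfl fun a₀ _ => Finset.sum_congr rfl fun s₂ _ => ?_
        congr 1
        refine Finset.sum_congr rfl fun s _ => ?_
        rw [Finset.mul_sum]
        exact Finset.sum_congr rfl fun a _ => (mul_assoc _ _ _).symm
      simp only [piece1, piece2, ← Finset.sum_add_distrib]
      rw [← sum_comm3]
      refine Finset.sum_congr rfl fun a₀ _ => Finset.sum_congr rfl fun s₂ _ => ?_
      rw [hR]
      simp only [← mul_add, ← Finset.mul_sum]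
    rw [h0, h3]
    simp only [Finset.sum_add_distrib]
    rw [h2]
    simp only [mul_neg, Finset.sum_neg_distrib, neg_neg, neg_add]
end
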